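/- Let n ≥ k ≥ 1 be integers. Then (n/2)·ρ(T_{n,k}) < e(T_{n,k}) + 1, where e(T_{n,k}) denotes the number of edges of the Turán graph T_{n,k}. -/

import Mathlib

open SimpleGraph Finset

attribute [local instance] Classical.propDecidable

/-- The spectral radius (largest adjacency eigenvalue) of a graph on `Fin n`. -/
noncomputable def adjSpectralRadius {n : ℕ} (G : SimpleGraph (Fin n)) : ℝ :=
  sSup (spectrum ℝ (G.adjMatrix ℝ))

/-- `G` contains a copy of `H` (a subgraph isomorphic to `H`). -/
def Contains {α β : Type*} (G : SimpleGraph α) (H : SimpleGraph β) : Prop :=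
  ∃ f : β ↪ α, ∀ a b, H.Adj a b → G.Adj (f a) (f b)

/-- The book `B_s`: `s` triangles sharing a common edge, i.e. `K_{2,s}` plus the
edge inside the part of size two. -/
def book (s : ℕ) : SimpleGraph (Fin 2 ⊕ Fin s) :=
  SimpleGraph.fromRel (fun x _ => x.isLeft = true)

/-- The theta graph `θ_{r+1} = θ(1,2,r+1)`: vertices `0,…,r+1` form a path of length
`r+1`, the edge `0 ~ (r+1)`, and vertex `r+2` is adjacent to `0` and `r+1`. -/
def theta (r : ℕ) : SimpleGraph (Fin (r + 3)) :=
  SimpleGraph.fromRel (fun x y =>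
    (x.val + 1 = y.val ∧ y.val ≤ r + 1) ∨
    (x.val = 0 ∧ y.val = r + 1) ∨
    (x.val = r + 2 ∧ (y.val = 0 ∨ y.val = r + 1)))

/-- The number of edges of a graph. -/
noncomputable def edgeCount {V : Type*} (G : SimpleGraph V) : ℕ := G.edgeSet.ncard

/-- The number of ordered pairs `(a,b) ∈ s × t` with `a ~ b`.  For disjoint `s` and `t`
this is the number `e(s,t)` of edges between `s` and `t`; for `s = t` it is `2·e(s)`. -/
noncomputable def ordPairs {V : Type*} (G : SimpleGraph V) (s t : Finset V) : ℕ :=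
  ((s ×ˢ t).filter fun p => G.Adj p.1 p.2).card

/-- The number of edges inside a vertex subset `s`. -/
noncomputable def edgesIn {V : Type*} (G : SimpleGraph V) (s : Finset V) : ℕ :=
  (G.induce (s : Set V)).edgeSet.ncard

/-! ### Auxiliary lemmas -/

/-- If `x` is a positive vector with `A x ≤ t x` entrywise, then every adjacency
eigenvalue is at most `t`. -/
lemma aux_specBound {n : ℕ} (G : SimpleGraph (Fin n)) (A : Matrix (Fin n) (Fin n) ℝ)
    (hAdef : ∀ i j, A i j = if G.Adj i j then 1 else 0) (x : Fin n → ℝ) (t : ℝ)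
    (hx : ∀ i, 0 < x i) (ht : 0 ≤ t)
    (hAx : ∀ i, (A.mulVec x) i ≤ t * x i) :
    adjSpectralRadius G ≤ t := by
  have hG : G.adjMatrix ℝ = A := by
    ext i j
    rw [hAdef i j, SimpleGraph.adjMatrix_apply]
  rw [adjSpectralRadius, hG]
  apply Real.sSup_le _ ht
  intro μ hμ
  have hev : ∃ y : Fin n → ℝ, y ≠ 0 ∧ A.mulVec y = μ • y := by
    rw [← AlgEquiv.spectrum_eq (Matrix.toLinAlgEquiv'),
      ← Module.End.hasEigenvalue_iff_mem_spectrum] at hμ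
    obtain ⟨v, hv⟩ := hμ.exists_hasEigenvector
    refine ⟨v, hv.2, ?_⟩
    have := hv.apply_eq_smul
    rwa [Matrix.toLinAlgEquiv'_apply] at this
  obtain ⟨y, hy0, hy⟩ := hev
  set S := ∑ i, y i ^ 2 with hSdef
  have hS : 0 < S := by
    have h1 : ∃ i, y i ≠ 0 := by
      by_contra h; push_neg at h; exact hy0 (funext fun i => h i)
    obtain ⟨i, hi⟩ := h1
    refine sum_pos' (fun j _ => sq_nonneg _) ⟨i, mem_univ i, by positivity⟩
  have hAnn : ∀ i j, 0 ≤ A i j := fun i j => by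
    rw [hAdef]; positivity
  have hAsymm : ∀ i j, A i j = A j i := fun i j => by
    rw [hAdef, hAdef]
    by_cases h : G.Adj i j
    · rw [if_pos h, if_pos h.symm]
    · rw [if_neg h, if_neg (fun h2 => h h2.symm)]
  have hmv : ∀ (z : Fin n → ℝ) i, (A.mulVec z) i = ∑ j, A i j * z j := fun z i => by
    simp [Matrix.mulVec, dotProduct]
  have e1 : μ * S = ∑ i, ∑ j, A i j * y j * y i := by
    have : ∀ i, (A.mulVec y) i = μ * y i := fun i => by rw [hy]; simp
    calc μ * S = ∑ i, (μ * y i) * y i := by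
          rw [hSdef, mul_sum]; exact Finset.sum_congr rfl fun i _ => by ring
      _ = ∑ i, (A.mulVec y) i * y i := by
          exact Finset.sum_congr rfl fun i _ => by rw [this]
      _ = ∑ i, ∑ j, A i j * y j * y i := by
          exact Finset.sum_congr rfl fun i _ => by rw [hmv]; rw [Finset.sum_mul]
  have term : ∀ i j, A i j * y j * y i ≤
      A i j * (x j / x i * y i ^ 2) / 2 + A i j * (x i / x j * y j ^ 2) / 2 := by
    intro i j
    have hxi := hx i; have hxj := hx j
    have h2 : 2 * (x i * x j) * (y j * y i) ≤ x j * x j * y i ^ 2 + x i * x i * y j ^ 2 := by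
      nlinarith [sq_nonneg (x j * y i - x i * y j)]
    have h3 : y j * y i ≤ (x j / x i * y i ^ 2) / 2 + (x i / x j * y j ^ 2) / 2 := by
      rw [← sub_nonneg]
      have heq : (x j / x i * y i ^ 2) / 2 + (x i / x j * y j ^ 2) / 2 - y j * y i
          = (x j * x j * y i ^ 2 + x i * x i * y j ^ 2 - 2 * (x i * x j) * (y j * y i))
            / (2 * (x i * x j)) := by
        field_simp
      rw [heq]
      exact div_nonneg (by linarith) (by positivity)
    calc A i j * y j * y i = A i j * (y j * y i) := by ring
      _ ≤ A i j * ((x j / x i * y i ^ 2) / 2 + (x i / x j * y j ^ 2) / 2) :=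
          mul_le_mul_of_nonneg_left h3 (hAnn i j)
      _ = A i j * (x j / x i * y i ^ 2) / 2 + A i j * (x i / x j * y j ^ 2) / 2 := by ring
  have e2 : ∑ i, ∑ j, A i j * y j * y i ≤ t * S := by
    have swap : ∑ i, ∑ j, A i j * (x i / x j * y j ^ 2) / 2
        = ∑ i, ∑ j, A i j * (x j / x i * y i ^ 2) / 2 := by
      rw [Finset.sum_comm]
      exact Finset.sum_congr rfl fun i _ => Finset.sum_congr rfl fun j _ => by
        rw [hAsymm j i]
    have rowbd : ∀ i, ∑ j, A i j * (x j / x i * y i ^ 2) ≤ t * y i ^ 2 := by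
      intro i
      have hxi := hx i
      have hrw : ∑ j, A i j * (x j / x i * y i ^ 2) = (y i ^ 2 / x i) * (A.mulVec x) i := by
        rw [hmv, Finset.mul_sum]
        exact Finset.sum_congr rfl fun j _ => by field_simp
      rw [hrw]
      have h1 : (y i ^ 2 / x i) * (A.mulVec x) i ≤ (y i ^ 2 / x i) * (t * x i) :=
        mul_le_mul_of_nonneg_left (hAx i) (by positivity)
      have h2 : (y i ^ 2 / x i) * (t * x i) = t * y i ^ 2 := by field_simp
      linarith
    calc ∑ i, ∑ j, A i j * y j * y i
        ≤ ∑ i, ∑ j, (A i j * (x j / x i * y i ^ 2) / 2 + A i j * (x i / x j * y j ^ 2) / 2) :=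
          Finset.sum_le_sum fun i _ => Finset.sum_le_sum fun j _ => term i j
      _ = ∑ i, ∑ j, A i j * (x j / x i * y i ^ 2) / 2
          + ∑ i, ∑ j, A i j * (x i / x j * y j ^ 2) / 2 := by
          rw [← Finset.sum_add_distrib]
          exact Finset.sum_congr rfl fun i _ => Finset.sum_add_distrib
      _ = ∑ i, ∑ j, A i j * (x j / x i * y i ^ 2) := by
          rw [swap, ← Finset.sum_add_distrib]
          refine Finset.sum_congr rfl fun i _ => ?_
          rw [← Finset.sum_add_distrib]
          exact Finset.sum_congr rfl fun j _ => by ring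
      _ ≤ ∑ i, t * y i ^ 2 := Finset.sum_le_sum fun i _ => rowbd i
      _ = t * S := by rw [hSdef, Finset.mul_sum]
  have := e1 ▸ e2
  exact le_of_mul_le_mul_right (by linarith) hS

lemma aux_card_fiber (n k : ℕ) (hk : 0 < k) (j : ℕ) (hj : j < k) :
    ((univ : Finset (Fin n)).filter (fun w => w.val % k = j)).card
      = n / k + if j < n % k then 1 else 0 := by
  have h1 : ((univ : Finset (Fin n)).filter (fun w => w.val % k = j)).card
      = ((range n).filter (fun w => w % k = j)).card := by
    rw [← Nat.Iio_eq_range, ← Fin.map_valEmbedding_univ, Finset.filter_map, Finset.card_map]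
    rfl
  rw [h1]
  have h2 : ((range n).filter (fun w => w % k = j)).card = Nat.count (· ≡ j [MOD k]) n := by
    rw [Nat.count_eq_card_filter_range]
    apply Finset.card_bij (fun x _ => x) <;> simp [Nat.ModEq, Nat.mod_eq_of_lt hj]
  rw [h2, Nat.count_modEq_card _ hk, Nat.mod_eq_of_lt hj]

lemma aux_sum_fiber (n k : ℕ) (hk : 0 < k) (f : ℕ → ℝ) :
    ∑ w : Fin n, f (w.val % k)
      = ∑ j ∈ range k, ((n / k + if j < n % k then 1 else 0 : ℕ) : ℝ) * f j := by
  rw [← Finset.sum_fiberwise_of_maps_to (g := fun w : Fin n => w.val % k) (t := range k)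
    (fun x _ => mem_range.mpr (Nat.mod_lt _ hk))]
  refine Finset.sum_congr rfl fun j hj => ?_
  rw [Finset.sum_congr rfl (fun w hw => by rw [(mem_filter.mp hw).2]),
    Finset.sum_const, nsmul_eq_mul, aux_card_fiber n k hk j (mem_range.mp hj)]

lemma aux_turan_mulVec (n k : ℕ) (hk : 0 < k) (g : ℕ → ℝ) (x : Fin n → ℝ)
    (hxg : ∀ w, x w = g (w.val % k)) (v : Fin n) :
    (((turanGraph n k).adjMatrix ℝ).mulVec x) v
      = (∑ j ∈ range k, ((n / k + if j < n % k then 1 else 0 : ℕ) : ℝ) * g j)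
        - ((n / k + if v.val % k < n % k then 1 else 0 : ℕ) : ℝ) * g (v.val % k) := by
  obtain rfl : x = fun w => g (w.val % k) := funext hxg
  rw [SimpleGraph.adjMatrix_mulVec_apply, ← aux_sum_fiber n k hk]
  have hadj : ∀ w : Fin n, (turanGraph n k).Adj v w ↔ ¬ (w.val % k = v.val % k) := by
    intro w
    constructor <;> { intro h; simp [turanGraph] at h ⊢; omega }
  have hnb : (turanGraph n k).neighborFinset v
      = univ.filter (fun w => ¬ (w.val % k = v.val % k)) := by
    ext w; simp [SimpleGraph.mem_neighborFinset, hadj w]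
  rw [hnb]
  have hsplit := Finset.sum_filter_add_sum_filter_not (univ : Finset (Fin n))
    (fun w => w.val % k = v.val % k) (fun w => g (w.val % k))
  have hfib : ∑ w ∈ univ.filter (fun w : Fin n => w.val % k = v.val % k), g (w.val % k)
      = ((n / k + if v.val % k < n % k then 1 else 0 : ℕ) : ℝ) * g (v.val % k) := by
    rw [Finset.sum_congr rfl (fun w hw => by rw [(mem_filter.mp hw).2]),
      Finset.sum_const, nsmul_eq_mul, aux_card_fiber n k hk _ (Nat.mod_lt _ hk)]
  linarith [hsplit, hfib]

lemma aux_turan_c_sum (n k : ℕ) (hk : 0 < k) :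
    ∑ j ∈ range k, ((n / k + if j < n % k then 1 else 0 : ℕ) : ℝ) = n := by
  have := aux_sum_fiber n k hk (fun _ => 1)
  simp only [mul_one] at this
  rw [← this]; simp

lemma aux_turan_edgeCount (n k : ℕ) (hk : 0 < k) :
    (edgeCount (turanGraph n k) : ℝ) * 2
      = (n : ℝ)^2 - ∑ j ∈ range k, (((n / k + if j < n % k then 1 else 0 : ℕ) : ℝ))^2 := by
  classical
  have hec : edgeCount (turanGraph n k) = (turanGraph n k).edgeFinset.card := by
    rw [edgeCount, Set.ncard_eq_toFinset_card']
    congr 1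
  have hdeg : ∀ v : Fin n, ((turanGraph n k).degree v : ℝ)
      = (n : ℝ) - ((n / k + if v.val % k < n % k then 1 else 0 : ℕ) : ℝ) := by
    intro v
    have h := aux_turan_mulVec n k hk (fun _ => 1) (fun _ => 1) (fun _ => rfl) v
    rw [SimpleGraph.adjMatrix_mulVec_apply] at h
    simp only [Finset.sum_const, nsmul_eq_mul, mul_one] at h
    have hd : ((turanGraph n k).degree v : ℝ)
        = (((turanGraph n k).neighborFinset v).card : ℝ) := rfl
    rw [hd, h, aux_turan_c_sum n k hk]
  have hsum : ∑ v : Fin n, ((turanGraph n k).degree v : ℝ)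
      = (n : ℝ)^2 - ∑ j ∈ range k, (((n / k + if j < n % k then 1 else 0 : ℕ) : ℝ))^2 := by
    have h2 := aux_sum_fiber n k hk
      (fun j => (n : ℝ) - ((n / k + if j < n % k then 1 else 0 : ℕ) : ℝ))
    calc ∑ v : Fin n, ((turanGraph n k).degree v : ℝ)
        = ∑ w : Fin n, ((n : ℝ) - ((n / k + if w.val % k < n % k then 1 else 0 : ℕ) : ℝ)) :=
          Finset.sum_congr rfl fun v _ => hdeg v
      _ = ∑ j ∈ range k, ((n / k + if j < n % k then 1 else 0 : ℕ) : ℝ)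
            * ((n : ℝ) - ((n / k + if j < n % k then 1 else 0 : ℕ) : ℝ)) := h2
      _ = (n : ℝ) * ∑ j ∈ range k, ((n / k + if j < n % k then 1 else 0 : ℕ) : ℝ)
            - ∑ j ∈ range k, (((n / k + if j < n % k then 1 else 0 : ℕ) : ℝ))^2 := by
          rw [Finset.mul_sum, ← Finset.sum_sub_distrib]
          exact Finset.sum_congr rfl fun j _ => by ring
      _ = (n : ℝ)^2 - ∑ j ∈ range k, (((n / k + if j < n % k then 1 else 0 : ℕ) : ℝ))^2 := by
          rw [aux_turan_c_sum n k hk]; ring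
  rw [← hsum, hec]
  have h3 := (turanGraph n k).sum_degrees_eq_twice_card_edges
  rw [show ∑ v : Fin n, ((turanGraph n k).degree v : ℝ)
      = ((∑ v : Fin n, (turanGraph n k).degree v : ℕ) : ℝ) by push_cast; ring, h3]
  push_cast; ring

lemma aux_sum_ite_range (k r : ℕ) (hrk : r ≤ k) (F Gc : ℝ) :
    ∑ j ∈ Finset.range k, (if j < r then F else Gc) = r * F + ((k:ℝ) - r) * Gc := by
  rw [Finset.sum_ite]
  have h1 : (Finset.range k).filter (fun j => j < r) = Finset.range r := by
    ext j; simp only [Finset.mem_filter, Finset.mem_range]; omega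
  have h2 : ((Finset.range k).filter (fun j => ¬ j < r)).card = k - r := by
    have h3 : (Finset.range k).filter (fun j => ¬ j < r) = Finset.Ico r k := by
      ext j; simp only [Finset.mem_filter, Finset.mem_range, Finset.mem_Ico]; omega
    rw [h3, Nat.card_Ico]
  rw [h1, Finset.sum_const, Finset.sum_const, h2, Finset.card_range,
    nsmul_eq_mul, nsmul_eq_mul]
  have : ((k - r : ℕ) : ℝ) = (k : ℝ) - r := by
    push_cast [hrk]; ring
  rw [this]

lemma aux_keyP (k s a : ℝ) (ha : 1 ≤ a) (hs : 1 ≤ s) (hak : a + 1 ≤ k) :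
    0 ≤ a - a^2 + a^3 + s*a - 3*s*a^2 + 2*s*a^3 - 2*s^2*a^2 + 2*s^2*a^3 + s^3*a^3
      + k*s*a + k*s*a^2 + k*s^2*a - k*s^3*a^2 + k^2*s^2*a + k^2*s^3*a := by
  have hb : 0 ≤ k - a := by linarith
  have ha0 : (0:ℝ) ≤ a := by linarith
  have hs0 : (0:ℝ) ≤ s := by linarith
  have hid : a - a^2 + a^3 + s*a - 3*s*a^2 + 2*s*a^3 - 2*s^2*a^2 + 2*s^2*a^3 + s^3*a^3
      + k*s*a + k*s*a^2 + k*s^2*a - k*s^3*a^2 + k^2*s^2*a + k^2*s^3*a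
    = a*( 1 + (a-1)*a + s*(2*a^2 + (a-1)^2) + s^2*a*(3*a-1) + s^3*a^2
      + (k-a)*s*(1+a) + (k-a)*s^2*(1+2*a) + (k-a)*s^3*a + (k-a)^2*s^2*(1+s) ) := by ring
  rw [hid]
  have h1 : (0:ℝ) ≤ (a-1)*a := mul_nonneg (by linarith) ha0
  have h2 : (0:ℝ) ≤ s*(2*a^2 + (a-1)^2) := by positivity
  have h3 : (0:ℝ) ≤ s^2*a*(3*a-1) := by
    apply mul_nonneg (by positivity); linarith
  have h6 : (0:ℝ) ≤ (k-a)*s*(1+a) := by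
    apply mul_nonneg (mul_nonneg hb hs0); linarith
  have h7 : (0:ℝ) ≤ (k-a)*s^2*(1+2*a) := by
    apply mul_nonneg (mul_nonneg hb (by positivity)); linarith
  have h8 : (0:ℝ) ≤ (k-a)*s^3*a := mul_nonneg (mul_nonneg hb (by positivity)) ha0
  have h9 : (0:ℝ) ≤ (k-a)^2*s^2*(1+s) := by positivity
  have h4 : (0:ℝ) ≤ s^3*a^2 := by positivity
  apply mul_nonneg ha0
  linarith

lemma aux_keyI (k s a N : ℝ) (ha : 1 ≤ a) (hs : 1 ≤ s) (hak : a + 1 ≤ k) (hN : N = s*k+a) :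
    (a-1)*(s+1)*((N*a*(s+1) - a*(s+1)+1)/(N*a*(s+1))) + (k-a)*s
      ≤ (a*(s+1)*((N*a*(s+1) - a*(s+1)+1)/(N*a*(s+1))) + (k-a-1)*s)
        * ((N*a*(s+1) - a*(s+1)+1)/(N*a*(s+1))) := by
  subst hN
  have hD : (0:ℝ) < (s*k+a)*a*(s+1) := by
    nlinarith [mul_pos (show (0:ℝ) < s*k+a by nlinarith)
      (show (0:ℝ) < a*(s+1) by nlinarith)]
  rw [← sub_nonneg]
  have hfe : (a*(s+1)*(((s*k+a)*a*(s+1) - a*(s+1)+1)/((s*k+a)*a*(s+1))) + (k-a-1)*s)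
        * ((((s*k+a))*a*(s+1) - a*(s+1)+1)/(((s*k+a))*a*(s+1)))
      - ((a-1)*(s+1)*((((s*k+a))*a*(s+1) - a*(s+1)+1)/(((s*k+a))*a*(s+1))) + (k-a)*s)
      = (a - a^2 + a^3 + s*a - 3*s*a^2 + 2*s*a^3 - 2*s^2*a^2 + 2*s^2*a^3 + s^3*a^3
      + k*s*a + k*s*a^2 + k*s^2*a - k*s^3*a^2 + k^2*s^2*a + k^2*s^3*a)
        / ((s*k+a)*a*(s+1))^2 := by
    have hD1 : s*k+a ≠ 0 := by nlinarith
    have hD2 : a ≠ 0 := by linarith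
    have hD3 : s+1 ≠ 0 := by linarith
    field_simp
    ring
  rw [hfe]
  exact div_nonneg (aux_keyP k s a ha hs hak) (by positivity)

lemma aux_keyII (k s a N : ℝ) (ha : 1 ≤ a) (hs : 1 ≤ s) (hak : a + 1 ≤ k) (hN : N = s*k+a) :
    N * (a*(s+1)*((N*a*(s+1) - a*(s+1)+1)/(N*a*(s+1))) + (k-a-1)*s)
      = N^2 - a*(s+1)^2 - (k-a)*s^2 + 1 := by
  subst hN
  have hD : (0:ℝ) < (s*k+a)*a*(s+1) := by
    nlinarith [mul_pos (show (0:ℝ) < s*k+a by nlinarith)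
      (show (0:ℝ) < a*(s+1) by nlinarith)]
  have hD1 : s*k+a ≠ 0 := by nlinarith
  have hD2 : a ≠ 0 := by linarith
  have hD3 : s+1 ≠ 0 := by linarith
  field_simp
  ring

/-- `(n/2)·ρ(T_{n,k}) < e(T_{n,k}) + 1` for `n ≥ k ≥ 1`. -/
theorem stmt9 (n k : ℕ) (hk : 1 ≤ k) (hn : k ≤ n) :
    (n : ℝ) / 2 * adjSpectralRadius (turanGraph n k) <
      (edgeCount (turanGraph n k) : ℝ) + 1 := by
  have hk0 : 0 < k := hk
  have hs1 : 1 ≤ n / k := (Nat.one_le_div_iff hk0).mpr hn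
  have hrk : n % k < k := Nat.mod_lt _ hk0
  have hNr : (n:ℝ) = ((n/k : ℕ):ℝ) * (k:ℝ) + ((n%k : ℕ):ℝ) := by
    have h := congrArg (Nat.cast : ℕ → ℝ) (Nat.div_add_mod n k)
    push_cast at h
    linarith
  have hE := aux_turan_edgeCount n k hk0
  have hs1' : (1:ℝ) ≤ ((n/k : ℕ):ℝ) := by exact_mod_cast hs1
  have hN1 : (1:ℝ) ≤ (n:ℝ) := by
    have h1 : 1 ≤ n := le_trans hk hn
    exact_mod_cast h1
  rcases Nat.eq_zero_or_pos (n % k) with hr0 | hr1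
  · -- regular case: k ∣ n
    have ht : (0:ℝ) ≤ (n:ℝ) - ((n/k : ℕ):ℝ) := by
      have h1 : (n/k : ℕ) ≤ n := Nat.div_le_self n k
      have h2 := (Nat.cast_le (α := ℝ)).mpr h1
      linarith
    have hρ : adjSpectralRadius (turanGraph n k) ≤ (n:ℝ) - ((n/k : ℕ):ℝ) := by
      refine aux_specBound (turanGraph n k) ((turanGraph n k).adjMatrix ℝ)
        (fun i j => by by_cases h : (turanGraph n k).Adj i j <;> simp [h])
        (fun _ : Fin n => (1:ℝ)) _ (fun i => one_pos) ht ?_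
      intro v
      rw [aux_turan_mulVec n k hk0 (fun _ => 1) (fun _ : Fin n => (1:ℝ)) (fun _ => rfl) v]
      simp only [mul_one]
      rw [aux_turan_c_sum n k hk0]
      simp only [hr0, Nat.not_lt_zero, if_false, Nat.add_zero]
      linarith
    have hsq0 : ∑ j ∈ range k, (((n / k + if j < n % k then 1 else 0 : ℕ) : ℝ))^2
        = (k:ℝ) * ((n/k : ℕ):ℝ)^2 := by
      rw [hr0]
      simp only [Nat.not_lt_zero, if_false, Nat.add_zero]
      rw [Finset.sum_const, Finset.card_range, nsmul_eq_mul]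
    rw [hsq0] at hE
    have hNr' : (n:ℝ) = ((n/k : ℕ):ℝ) * (k:ℝ) := by
      rw [hNr, hr0]; push_cast; ring
    have hns : (n:ℝ) * ((n/k : ℕ):ℝ) = (k:ℝ) * ((n/k : ℕ):ℝ)^2 := by
      rw [hNr']; ring
    have h1 : (n:ℝ)/2 * adjSpectralRadius (turanGraph n k)
        ≤ (n:ℝ)/2 * ((n:ℝ) - ((n/k : ℕ):ℝ)) :=
      mul_le_mul_of_nonneg_left hρ (by positivity)
    linarith [h1, hE, hns]
  · -- non-regular case
    have ha1 : (1:ℝ) ≤ ((n%k : ℕ):ℝ) := by exact_mod_cast hr1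
    have hak : ((n%k : ℕ):ℝ) + 1 ≤ (k:ℝ) := by
      have h1 : n % k + 1 ≤ k := hrk
      exact_mod_cast h1
    set s' : ℝ := ((n/k : ℕ):ℝ) with hs'
    set a' : ℝ := ((n%k : ℕ):ℝ) with ha'
    set k' : ℝ := (k:ℝ) with hk'
    set N : ℝ := (n:ℝ) with hNdef
    set α : ℝ := (N*a'*(s'+1) - a'*(s'+1)+1)/(N*a'*(s'+1)) with hα
    set t : ℝ := a'*(s'+1)*α + (k'-a'-1)*s' with ht'
    have hD : (0:ℝ) < N*a'*(s'+1) :=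
      mul_pos (mul_pos (by linarith) (by linarith)) (by linarith)
    have hα0 : 0 < α := by
      rw [hα]
      apply div_pos _ hD
      nlinarith [mul_nonneg (mul_nonneg (show (0:ℝ) ≤ a' by linarith)
        (show (0:ℝ) ≤ s'+1 by linarith)) (show (0:ℝ) ≤ N - 1 by linarith)]
    have ht : 0 ≤ t := by
      rw [ht']
      have h1 : (0:ℝ) ≤ a'*(s'+1)*α := by positivity
      have h2 : (0:ℝ) ≤ (k'-a'-1)*s' := mul_nonneg (by linarith) (by linarith)
      linarith
    have hkeyI := aux_keyI k' s' a' N ha1 hs1' hak hNr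
    rw [← hα] at hkeyI
    have hkeyII := aux_keyII k' s' a' N ha1 hs1' hak hNr
    rw [← hα, ← ht'] at hkeyII
    have hT : ∑ j ∈ range k, ((n / k + if j < n % k then 1 else 0 : ℕ) : ℝ)
          * (if j < n % k then α else 1)
        = a'*(s'+1)*α + (k'-a')*s' := by
      have hterm : ∀ j ∈ range k,
          ((n / k + if j < n % k then 1 else 0 : ℕ) : ℝ) * (if j < n % k then α else 1)
          = if j < n % k then (s'+1)*α else s' := by
        intro j _
        by_cases h : j < n % k
        · rw [if_pos h, if_pos h, if_pos h]
          push_cast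
          rw [← hs']
        · rw [if_neg h, if_neg h, if_neg h]
          rw [Nat.add_zero, ← hs', mul_one]
      rw [Finset.sum_congr rfl hterm, aux_sum_ite_range k (n % k) hrk.le,
        ← ha', ← hk']
      try ring
    have hρ : adjSpectralRadius (turanGraph n k) ≤ t := by
      refine aux_specBound (turanGraph n k) ((turanGraph n k).adjMatrix ℝ)
        (fun i j => by by_cases h : (turanGraph n k).Adj i j <;> simp [h])
        (fun w : Fin n => if w.val % k < n % k then α else 1) t ?_ ht ?_
      · intro i
        split_ifs
        exacts [hα0, one_pos]
      · intro v
        rw [aux_turan_mulVec n k hk0 (fun j : ℕ => if j < n % k then α else 1)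
          (fun w : Fin n => if w.val % k < n % k then α else 1) (fun _ => rfl) v, hT]
        by_cases h : v.val % k < n % k
        · simp only [h, if_true]
          push_cast
          rw [← hs', ht']
          linarith [hkeyI]
        · simp only [h, if_false, Nat.add_zero, mul_one]
          rw [← hs', ht']
          linarith
    have hsq : ∑ j ∈ range k, (((n / k + if j < n % k then 1 else 0 : ℕ) : ℝ))^2
        = a'*(s'+1)^2 + (k'-a')*s'^2 := by
      have hterm : ∀ j ∈ range k,
          (((n / k + if j < n % k then 1 else 0 : ℕ) : ℝ))^2
          = if j < n % k then (s'+1)^2 else s'^2 := by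
        intro j _
        by_cases h : j < n % k
        · rw [if_pos h, if_pos h]
          push_cast
          rw [← hs']
        · rw [if_neg h, if_neg h]
          rw [Nat.add_zero, ← hs']
      rw [Finset.sum_congr rfl hterm, aux_sum_ite_range k (n % k) hrk.le,
        ← ha', ← hk']
      try ring
    rw [hsq] at hE
    have h1 : N/2 * adjSpectralRadius (turanGraph n k) ≤ N/2 * t :=
      mul_le_mul_of_nonneg_left hρ (by linarith)
    clear_value s' a' k' N α t
    linarith [h1, hE, hkeyII]
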